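/- Let c_1,…,c_n be linearly independent vectors in ℝ^m. For S ⊆ {1,…,n}, let proj_S denote the orthogonal projection onto span{c_i : i ∈ S}, and define F(S) = ∑_{j=1}^n ‖c_j − proj_S(c_j)‖². Then for every i ∈ {1,…,n} and all S, T ⊆ {1,…,n}∖{i}: (F(S) − F(S ∪ {i})) · min_{‖x‖=1} ‖∑_j x_j c_j‖² ≤ (F(T) − F(T ∪ {i})) · max_{‖x‖=1} ‖∑_j x_j c_j‖². In particular, if c is the generalized curvature of F and κ the condition number of the matrix A with columns c_1,…,c_n, then 1/(1−c) ≤ κ². -/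

import Mathlib

local notation "⟪" x ", " y "⟫" => @inner ℝ _ _ x y

lemma marg_formula {m n : ℕ} (c : Fin n → EuclideanSpace ℝ (Fin m))
    (hli : LinearIndependent ℝ c) (i : Fin n) (S : Finset (Fin n)) (hiS : i ∉ S) :
    ∃ u : EuclideanSpace ℝ (Fin m), ‖u‖ = 1 ∧ u ∈ Submodule.span ℝ (Set.range c) ∧
      (∑ j : Fin n, ‖c j - (Submodule.orthogonalProjectionOnto (Submodule.span ℝ (c '' ↑S)) (c j) : EuclideanSpace ℝ (Fin m))‖ ^ 2)
      - (∑ j : Fin n, ‖c j - (Submodule.orthogonalProjectionOnto (Submodule.span ℝ (c '' ↑(insert i S))) (c j) : EuclideanSpace ℝ (Fin m))‖ ^ 2)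
      = ∑ j : Fin n, ⟪c j, u⟫ ^ 2 := by
  set K : Submodule ℝ (EuclideanSpace ℝ (Fin m)) := Submodule.span ℝ (c '' ↑S) with hK
  set K' : Submodule ℝ (EuclideanSpace ℝ (Fin m)) := Submodule.span ℝ (c '' ↑(insert i S)) with hK'
  set w : EuclideanSpace ℝ (Fin m) := c i - Submodule.orthogonalProjectionOnto K (c i) with hw
  have hwK : w ∈ Kᗮ := Submodule.sub_starProjection_mem_orthogonal (K := K) (c i)
  have hciK : c i ∉ K := hli.notMem_span_image (by simpa using hiS)
  have hwne : w ≠ 0 := by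
    intro h
    apply hciK
    have : c i = (Submodule.orthogonalProjectionOnto K (c i) : EuclideanSpace ℝ (Fin m)) := by
      rwa [hw, sub_eq_zero] at h
    rw [this]; exact (Submodule.orthogonalProjectionOnto K (c i)).2
  have hwnorm : ‖w‖ ≠ 0 := norm_ne_zero_iff.mpr hwne
  refine ⟨‖w‖⁻¹ • w, ?_, ?_, ?_⟩
  · rw [norm_smul, norm_inv, norm_norm, inv_mul_cancel₀ hwnorm]
  · have h1 : K ≤ Submodule.span ℝ (Set.range c) :=
      Submodule.span_mono (Set.image_subset_range _ _)
    have h2 : c i ∈ Submodule.span ℝ (Set.range c) :=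
      Submodule.subset_span (Set.mem_range_self i)
    exact Submodule.smul_mem _ _ (Submodule.sub_mem _ h2 (h1 (Submodule.orthogonalProjectionOnto K (c i)).2))
  · set u : EuclideanSpace ℝ (Fin m) := ‖w‖⁻¹ • w with hu
    have huK : u ∈ Kᗮ := Submodule.smul_mem _ _ hwK
    have hKK' : K ≤ K' := Submodule.span_mono (Set.image_mono (by simp [Finset.coe_insert]))
    have hciK' : c i ∈ K' := Submodule.subset_span ⟨i, by simp, rfl⟩
    have hwK' : w ∈ K' := Submodule.sub_mem _ hciK' (hKK' (Submodule.orthogonalProjectionOnto K (c i)).2)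
    have hww : ⟪w, w⟫ = ‖w‖ ^ 2 := real_inner_self_eq_norm_sq w
    have key : ∀ j : Fin n, (Submodule.orthogonalProjectionOnto K' (c j) : EuclideanSpace ℝ (Fin m))
        = (Submodule.orthogonalProjectionOnto K (c j) : EuclideanSpace ℝ (Fin m)) + ⟪c j, u⟫ • u := by
      intro j
      set P : EuclideanSpace ℝ (Fin m) := (Submodule.orthogonalProjectionOnto K (c j) : EuclideanSpace ℝ (Fin m)) with hP
      have hresid : c j - (P + ⟪c j, u⟫ • u) ∈ Kᗮ := by
        have heq : c j - (P + ⟪c j, u⟫ • u) = (c j - P) - ⟪c j, u⟫ • u := by abel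
        rw [heq]
        exact Submodule.sub_mem _ (Submodule.sub_starProjection_mem_orthogonal (K := K) (c j))
          (Submodule.smul_mem _ _ huK)
      apply Submodule.eq_starProjection_of_mem_of_inner_eq_zero
      · exact Submodule.add_mem _ (hKK' (Submodule.orthogonalProjectionOnto K (c j)).2)
          (Submodule.smul_mem _ _ (Submodule.smul_mem _ _ hwK'))
      · intro z hz
        have hKsup : K' = Submodule.span ℝ {c i} ⊔ K := by
          rw [hK', Finset.coe_insert, Set.image_insert_eq, Submodule.span_insert]
        rw [hKsup, Submodule.mem_sup] at hz
        obtain ⟨a, ha, b, hb, rfl⟩ := hz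
        rw [inner_add_right, (Submodule.mem_orthogonal' _ _).mp hresid b hb, add_zero]
        rw [Submodule.mem_span_singleton] at ha
        obtain ⟨t, rfl⟩ := ha
        rw [real_inner_smul_right]
        have hcieq : c i = w + Submodule.orthogonalProjectionOnto K (c i) := by rw [hw]; abel
        have hz0 : ⟪c j - (P + ⟪c j, u⟫ • u), c i⟫ = 0 := by
          rw [hcieq, inner_add_right,
            (Submodule.mem_orthogonal' _ _).mp hresid _ (Submodule.orthogonalProjectionOnto K (c i)).2, add_zero]
          have hPw : ⟪P, w⟫ = 0 := hwK P (Submodule.orthogonalProjectionOnto K (c j)).2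
          rw [inner_sub_left, inner_add_left, hPw, real_inner_smul_left, hu,
            real_inner_smul_left, real_inner_smul_right, hww]
          field_simp
          ring
        rw [hz0, mul_zero]
    have hnorm1 : ‖u‖ = 1 := by
      rw [hu, norm_smul, norm_inv, norm_norm, inv_mul_cancel₀ hwnorm]
    have perj : ∀ j : Fin n,
        ‖c j - (Submodule.orthogonalProjectionOnto K (c j) : EuclideanSpace ℝ (Fin m))‖ ^ 2
        - ‖c j - (Submodule.orthogonalProjectionOnto K' (c j) : EuclideanSpace ℝ (Fin m))‖ ^ 2
        = ⟪c j, u⟫ ^ 2 := by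
      intro j
      rw [key j]
      set P : EuclideanSpace ℝ (Fin m) := (Submodule.orthogonalProjectionOnto K (c j) : EuclideanSpace ℝ (Fin m)) with hP
      set t : ℝ := ⟪c j, u⟫ with ht
      have heq : c j - (P + t • u) = (c j - P) - t • u := by abel
      rw [heq]
      have hr0u : ⟪c j - P, u⟫ = t := by
        rw [inner_sub_left, (Submodule.mem_orthogonal _ _).mp huK P (Submodule.orthogonalProjectionOnto K (c j)).2,
          sub_zero, ht, real_inner_comm]
      have := @norm_sub_sq_real (EuclideanSpace ℝ (Fin m)) _ _ (c j - P) (t • u)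
      rw [real_inner_smul_right, hr0u, norm_smul, mul_pow] at this
      rw [this, hnorm1]
      simp
      ring
    rw [← Finset.sum_sub_distrib]
    exact Finset.sum_congr rfl fun j _ => perj j


lemma scale_bound {m n : ℕ} (c : Fin n → EuclideanSpace ℝ (Fin m)) (a : ℝ)
    (hub : ∀ x : EuclideanSpace ℝ (Fin n), ‖x‖ = 1 → ‖∑ j : Fin n, x j • c j‖ ≤ a)
    (x : EuclideanSpace ℝ (Fin n)) : ‖∑ j : Fin n, x j • c j‖ ≤ a * ‖x‖ := by
  rcases eq_or_ne x 0 with rfl | hx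
  · simp
  · have hnx : ‖x‖ ≠ 0 := norm_ne_zero_iff.mpr hx
    have h1 : ‖(‖x‖⁻¹ • x : EuclideanSpace ℝ (Fin n))‖ = 1 := by
      rw [norm_smul, norm_inv, norm_norm, inv_mul_cancel₀ hnx]
    have h2 := hub _ h1
    have h3 : ∑ j : Fin n, (‖x‖⁻¹ • x : EuclideanSpace ℝ (Fin n)) j • c j
        = ‖x‖⁻¹ • ∑ j : Fin n, x j • c j := by
      rw [Finset.smul_sum]
      refine Finset.sum_congr rfl fun j _ => ?_
      rw [PiLp.smul_apply, smul_eq_mul, mul_smul]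
    rw [h3, norm_smul, norm_inv, norm_norm] at h2
    have h4 := mul_le_mul_of_nonneg_right h2 (norm_nonneg x)
    have heq : ‖x‖⁻¹ * ‖∑ j : Fin n, x j • c j‖ * ‖x‖ = ‖∑ j : Fin n, x j • c j‖ := by
      field_simp
    rwa [heq] at h4

lemma scale_bound' {m n : ℕ} (c : Fin n → EuclideanSpace ℝ (Fin m)) (a : ℝ)
    (hlb : ∀ x : EuclideanSpace ℝ (Fin n), ‖x‖ = 1 → a ≤ ‖∑ j : Fin n, x j • c j‖)
    (x : EuclideanSpace ℝ (Fin n)) (hx : x ≠ 0) : a * ‖x‖ ≤ ‖∑ j : Fin n, x j • c j‖ := by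
  have hnx : ‖x‖ ≠ 0 := norm_ne_zero_iff.mpr hx
  have h1 : ‖(‖x‖⁻¹ • x : EuclideanSpace ℝ (Fin n))‖ = 1 := by
    rw [norm_smul, norm_inv, norm_norm, inv_mul_cancel₀ hnx]
  have h2 := hlb _ h1
  have h3 : ∑ j : Fin n, (‖x‖⁻¹ • x : EuclideanSpace ℝ (Fin n)) j • c j
      = ‖x‖⁻¹ • ∑ j : Fin n, x j • c j := by
    rw [Finset.smul_sum]
    refine Finset.sum_congr rfl fun j _ => ?_
    rw [PiLp.smul_apply, smul_eq_mul, mul_smul]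
  rw [h3, norm_smul, norm_inv, norm_norm] at h2
  have h4 := mul_le_mul_of_nonneg_right h2 (norm_nonneg x)
  have heq : ‖x‖⁻¹ * ‖∑ j : Fin n, x j • c j‖ * ‖x‖ = ‖∑ j : Fin n, x j • c j‖ := by
    field_simp
  rw [heq] at h4; exact h4

lemma sum_inner_sq_eq {m n : ℕ} (c : Fin n → EuclideanSpace ℝ (Fin m))
    (u : EuclideanSpace ℝ (Fin m)) (x : EuclideanSpace ℝ (Fin n))
    (hx : ∀ j, x j = ⟪c j, u⟫) :
    (∑ j : Fin n, ⟪c j, u⟫ ^ 2) = ‖x‖ ^ 2 ∧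
    ⟪∑ j : Fin n, x j • c j, u⟫ = ‖x‖ ^ 2 := by
  have hn : ‖x‖ ^ 2 = ∑ j : Fin n, (x j) ^ 2 := by
    rw [EuclideanSpace.norm_eq, Real.sq_sqrt (by positivity)]
    exact Finset.sum_congr rfl fun j _ => by rw [Real.norm_eq_abs, sq_abs]
  constructor
  · rw [hn]; exact Finset.sum_congr rfl fun j _ => by rw [hx j]
  · rw [sum_inner, hn]
    refine Finset.sum_congr rfl fun j _ => ?_
    rw [real_inner_smul_left, hx j, sq]

lemma inner_sq_upper {m n : ℕ} (c : Fin n → EuclideanSpace ℝ (Fin m)) (maxA : ℝ)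
    (hmax0 : 0 ≤ maxA)
    (hub : ∀ x : EuclideanSpace ℝ (Fin n), ‖x‖ = 1 → ‖∑ j : Fin n, x j • c j‖ ≤ maxA)
    (u : EuclideanSpace ℝ (Fin m)) (hu : ‖u‖ = 1) :
    ∑ j : Fin n, ⟪c j, u⟫ ^ 2 ≤ maxA ^ 2 := by
  set x : EuclideanSpace ℝ (Fin n) := WithLp.toLp 2 (fun j => ⟪c j, u⟫) with hxdef
  obtain ⟨h1, h2⟩ := sum_inner_sq_eq c u x fun j => rfl
  have h3 : ⟪∑ j : Fin n, x j • c j, u⟫ ≤ maxA * ‖x‖ := by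
    calc ⟪∑ j : Fin n, x j • c j, u⟫ ≤ ‖∑ j : Fin n, x j • c j‖ * ‖u‖ := real_inner_le_norm _ _
    _ = ‖∑ j : Fin n, x j • c j‖ := by rw [hu, mul_one]
    _ ≤ maxA * ‖x‖ := scale_bound c maxA hub x
  rw [h2] at h3
  rw [h1]
  nlinarith [norm_nonneg x]

lemma inner_sq_lower {m n : ℕ} (c : Fin n → EuclideanSpace ℝ (Fin m)) (minA : ℝ)
    (hmin0 : 0 ≤ minA)
    (hlb : ∀ x : EuclideanSpace ℝ (Fin n), ‖x‖ = 1 → minA ≤ ‖∑ j : Fin n, x j • c j‖)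
    (u : EuclideanSpace ℝ (Fin m)) (hu : ‖u‖ = 1)
    (husp : u ∈ Submodule.span ℝ (Set.range c)) :
    minA ^ 2 ≤ ∑ j : Fin n, ⟪c j, u⟫ ^ 2 := by
  obtain ⟨y, hy⟩ := (Submodule.mem_span_range_iff_exists_fun ℝ).mp husp
  set x : EuclideanSpace ℝ (Fin n) := WithLp.toLp 2 (fun j => ⟪c j, u⟫) with hxdef
  obtain ⟨h1, -⟩ := sum_inner_sq_eq c u x fun j => rfl
  set y' : EuclideanSpace ℝ (Fin n) := WithLp.toLp 2 (fun j => y j) with hydef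
  have hyne : y' ≠ 0 := by
    intro h
    have : (∑ i : Fin n, y i • c i) = 0 := by
      refine Finset.sum_eq_zero fun i _ => ?_
      have : y i = 0 := congrArg (fun v : EuclideanSpace ℝ (Fin n) => v i) h
      rw [this, zero_smul]
    rw [hy] at this
    rw [this] at hu
    simp at hu
  have hcs : (1 : ℝ) ≤ ‖y'‖ * ‖x‖ := by
    have hinner : ⟪y', x⟫ = ∑ j : Fin n, y j * ⟪c j, u⟫ := by
      rw [PiLp.inner_apply]
      exact Finset.sum_congr rfl fun j _ => by simp [hydef, hxdef, RCLike.inner_apply, mul_comm]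
    have h2 : (1 : ℝ) = ⟪y', x⟫ := by
      rw [hinner]
      have hs : ∑ j : Fin n, y j * ⟪c j, u⟫ = ⟪∑ i : Fin n, y i • c i, u⟫ := by
        rw [sum_inner]
        exact Finset.sum_congr rfl fun j _ => (real_inner_smul_left _ _ _).symm
      rw [hs, hy, real_inner_self_eq_norm_sq, hu, one_pow]
    calc (1 : ℝ) = ⟪y', x⟫ := h2
    _ ≤ ‖y'‖ * ‖x‖ := real_inner_le_norm _ _
  have hylb : minA * ‖y'‖ ≤ 1 := by
    have := scale_bound' c minA hlb y' hyne
    rw [show (∑ j : Fin n, y' j • c j) = ∑ i : Fin n, y i • c i from rfl, hy, hu] at this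
    exact this
  have hminx : minA ≤ ‖x‖ := by
    nlinarith [norm_nonneg x, norm_nonneg y']
  rw [h1]
  nlinarith [norm_nonneg x]

lemma minA_pos {m n : ℕ} (c : Fin n → EuclideanSpace ℝ (Fin m))
    (hli : LinearIndependent ℝ c) (j0 : Fin n) (minA : ℝ)
    (hmin : IsGLB {y : ℝ | ∃ x : EuclideanSpace ℝ (Fin n), ‖x‖ = 1 ∧ y = ‖∑ j : Fin n, x j • c j‖} minA) :
    0 < minA := by
  set V : Set ℝ := {y : ℝ | ∃ x : EuclideanSpace ℝ (Fin n), ‖x‖ = 1 ∧ y = ‖∑ j : Fin n, x j • c j‖} with hV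
  have himg : V = (fun x : EuclideanSpace ℝ (Fin n) => ‖∑ j : Fin n, x j • c j‖) ''
      Metric.sphere 0 1 := by
    ext y
    simp only [hV, Set.mem_setOf_eq, Set.mem_image, mem_sphere_zero_iff_norm]
    exact ⟨fun ⟨x, h1, h2⟩ => ⟨x, h1, h2.symm⟩, fun ⟨x, h1, h2⟩ => ⟨x, h1, h2.symm⟩⟩
  have hcont : Continuous fun x : EuclideanSpace ℝ (Fin n) => ‖∑ j : Fin n, x j • c j‖ := by
    refine (continuous_finset_sum _ fun j _ => ?_).norm
    exact ((EuclideanSpace.proj j).continuous).smul continuous_const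
  have hcomp : IsCompact V := himg ▸ (isCompact_sphere 0 1).image hcont
  have hne : V.Nonempty := by
    refine ⟨‖∑ j : Fin n, (EuclideanSpace.single j0 (1:ℝ)) j • c j‖, EuclideanSpace.single j0 1, ?_, rfl⟩
    simp [EuclideanSpace.norm_single]
  have hinf : minA ∈ V := by
    have := hcomp.sInf_mem hne
    rwa [hmin.csInf_eq hne] at this
  obtain ⟨x, hx1, hx2⟩ := hinf
  rw [hx2]
  rw [norm_pos_iff]
  intro h0
  have := (Fintype.linearIndependent_iff.mp hli) (fun j => x j) h0
  have : x = 0 := by ext j; exact this j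
  rw [this] at hx1
  simp at hx1

lemma marg_bounds {m n : ℕ} (c : Fin n → EuclideanSpace ℝ (Fin m))
    (hli : LinearIndependent ℝ c)
    (F : Finset (Fin n) → ℝ)
    (hF : ∀ S : Finset (Fin n), F S = ∑ j : Fin n,
      ‖c j - (Submodule.orthogonalProjectionOnto (Submodule.span ℝ (c '' ↑S)) (c j) : EuclideanSpace ℝ (Fin m))‖ ^ 2)
    (minA maxA : ℝ)
    (hmin : IsGLB {y : ℝ | ∃ x : EuclideanSpace ℝ (Fin n), ‖x‖ = 1 ∧ y = ‖∑ j : Fin n, x j • c j‖} minA)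
    (hmax : IsLUB {y : ℝ | ∃ x : EuclideanSpace ℝ (Fin n), ‖x‖ = 1 ∧ y = ‖∑ j : Fin n, x j • c j‖} maxA)
    (i : Fin n) (S : Finset (Fin n)) (hiS : i ∉ S) :
    minA ^ 2 ≤ F S - F (insert i S) ∧ F S - F (insert i S) ≤ maxA ^ 2 := by
  have hub : ∀ x : EuclideanSpace ℝ (Fin n), ‖x‖ = 1 → ‖∑ j : Fin n, x j • c j‖ ≤ maxA :=
    fun x hx => hmax.1 ⟨x, hx, rfl⟩
  have hlb : ∀ x : EuclideanSpace ℝ (Fin n), ‖x‖ = 1 → minA ≤ ‖∑ j : Fin n, x j • c j‖ :=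
    fun x hx => hmin.1 ⟨x, hx, rfl⟩
  have hmin0 : 0 ≤ minA := hmin.2 fun y hy => by
    obtain ⟨x, -, rfl⟩ := hy; exact norm_nonneg _
  have hmax0 : 0 ≤ maxA := by
    have h1 : ‖(EuclideanSpace.single i (1:ℝ) : EuclideanSpace ℝ (Fin n))‖ = 1 := by
      simp [EuclideanSpace.norm_single]
    exact (norm_nonneg _).trans (hub _ h1)
  obtain ⟨u, hu1, hu2, hu3⟩ := marg_formula c hli i S hiS
  rw [hF, hF, hu3]
  exact ⟨inner_sq_lower c minA hmin0 hlb u hu1 hu2, inner_sq_upper c maxA hmax0 hub u hu1⟩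


/-- Lemma 8.1 (curvature vs. condition number for column-subset selection): for linearly
independent columns, the marginal decreases of `F` satisfy
`(F(S) - F(S∪{i}))·min_{‖x‖=1}‖Ax‖² ≤ (F(T) - F(T∪{i}))·max_{‖x‖=1}‖Ax‖²`; in particular,
if `c` is the generalized curvature of `F` and `κ` the condition number of `A`,
then `1/(1-c) ≤ κ²`. -/
theorem stmt_11 {m n : ℕ} (c : Fin n → EuclideanSpace ℝ (Fin m))
    (hli : LinearIndependent ℝ c)
    (F : Finset (Fin n) → ℝ)
    (hF : ∀ S : Finset (Fin n), F S = ∑ j : Fin n,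
      ‖c j - (Submodule.orthogonalProjectionOnto (Submodule.span ℝ (c '' ↑S)) (c j) : EuclideanSpace ℝ (Fin m))‖ ^ 2)
    (minA maxA : ℝ)
    (hmin : IsGLB {y : ℝ | ∃ x : EuclideanSpace ℝ (Fin n), ‖x‖ = 1 ∧ y = ‖∑ j : Fin n, x j • c j‖} minA)
    (hmax : IsLUB {y : ℝ | ∃ x : EuclideanSpace ℝ (Fin n), ‖x‖ = 1 ∧ y = ‖∑ j : Fin n, x j • c j‖} maxA)
    (curv κ : ℝ) (hκ : κ = maxA / minA)
    (hcurv : 1 / (1 - curv) = sSup {y : ℝ | ∃ (j : Fin n) (S T : Finset (Fin n)),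
      j ∉ S ∧ j ∉ T ∧ y = |F (insert j S) - F S| / |F (insert j T) - F T|}) :
    (∀ (i : Fin n) (S T : Finset (Fin n)), i ∉ S → i ∉ T →
      (F S - F (insert i S)) * minA ^ 2 ≤ (F T - F (insert i T)) * maxA ^ 2) ∧
    1 / (1 - curv) ≤ κ ^ 2 := by
  have hmin0 : 0 ≤ minA := hmin.2 fun y hy => by
    obtain ⟨x, -, rfl⟩ := hy; exact norm_nonneg _
  constructor
  · intro i S T hiS hiT
    obtain ⟨hS1, hS2⟩ := marg_bounds c hli F hF minA maxA hmin hmax i S hiS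
    obtain ⟨hT1, hT2⟩ := marg_bounds c hli F hF minA maxA hmin hmax i T hiT
    nlinarith [sq_nonneg minA, sq_nonneg maxA]
  · rw [hcurv]
    apply Real.sSup_le _ (by positivity)
    rintro y ⟨j, S, T, hjS, hjT, rfl⟩
    obtain ⟨hS1, hS2⟩ := marg_bounds c hli F hF minA maxA hmin hmax j S hjS
    obtain ⟨hT1, hT2⟩ := marg_bounds c hli F hF minA maxA hmin hmax j T hjT
    have hpos : 0 < minA := minA_pos c hli j minA hmin
    have hminsq : 0 < minA ^ 2 := by positivity
    have hmargT : 0 < F T - F (insert j T) := lt_of_lt_of_le hminsq hT1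
    have hmargS : 0 ≤ F S - F (insert j S) := le_trans (le_of_lt hminsq) hS1
    have ha : |F (insert j S) - F S| = F S - F (insert j S) := by
      rw [abs_sub_comm, abs_of_nonneg hmargS]
    have hb : |F (insert j T) - F T| = F T - F (insert j T) := by
      rw [abs_sub_comm, abs_of_nonneg hmargT.le]
    rw [ha, hb, hκ, div_pow]
    exact div_le_div₀ (by positivity) hS2 hminsq hT1
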